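/- Define g(ι; w) = 1/ī + (w/Q)((1−ī)/ī)[2ρwμ⁺((1−ī)/ī)ι² − (Qρ+ν)]⁺ and let ι*(w) ∈ (0, ī] be the unique solution of 1/ι = g(ι; w). Then ι*(w) is nonincreasing in w: if w₁ ≤ w₂ then ι*(w₂) ≤ ι*(w₁). The same monotonicity holds with respect to μ⁺, and ι* is nondecreasing as a function of Q and of ν. -/

import Mathlib

private lemma fix_mono (f₁ f₂ : ℝ → ℝ) {ι₁ ι₂ : ℝ} (h1 : 0 < ι₁) (h2 : 0 < ι₂)
    (hm : ∀ ⦃x y : ℝ⦄, 0 < x → x ≤ y → f₂ x ≤ f₂ y)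
    (hle : f₁ ι₁ ≤ f₂ ι₁)
    (e1 : 1 / ι₁ = f₁ ι₁) (e2 : 1 / ι₂ = f₂ ι₂) : ι₂ ≤ ι₁ := by
  by_contra h
  push_neg at h
  have hlt : 1 / ι₂ < 1 / ι₁ := one_div_lt_one_div_of_lt h1 h
  have : (1 : ℝ) / ι₂ < 1 / ι₂ := by
    calc 1 / ι₂ < 1 / ι₁ := hlt
      _ = f₁ ι₁ := e1
      _ ≤ f₂ ι₁ := hle
      _ ≤ f₂ ι₂ := hm h1 h.le
      _ = 1 / ι₂ := e2.symm
  exact lt_irrefl _ this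

private lemma g_mono {c a b base : ℝ} (hc : 0 ≤ c) (ha : 0 ≤ a) :
    ∀ ⦃x y : ℝ⦄, 0 < x → x ≤ y →
      base + c * max (a * x ^ 2 - b) 0 ≤ base + c * max (a * y ^ 2 - b) 0 := by
  intro x y hx hxy
  have hxy2 : x ^ 2 ≤ y ^ 2 := by nlinarith
  exact add_le_add_right (mul_le_mul_of_nonneg_left
    (max_le_max (by nlinarith [mul_nonneg ha (sub_nonneg.2 hxy2)]) le_rfl) hc) base



/-- Monotonicity of the optimal spoofed imbalance: the solution `ι*` of the fixed-point
equation in `(0, ibar]` is nonincreasing in `w` and in `μ⁺`, and nondecreasing in `Q` and `ν`. -/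
theorem stmt_10 (ibar ρ μp Q w ν : ℝ)
    (hibar0 : 0 < ibar) (hibar1 : ibar < 1) (hρ : 0 < ρ) (hμ : 0 < μp) (hQ : 0 < Q) (hw : 0 < w)
    (hν : 0 ≤ ν) :
    (∀ w₁ w₂ ι₁ ι₂ : ℝ, 0 < w₁ → w₁ ≤ w₂ →
      ι₁ ∈ Set.Ioc (0 : ℝ) ibar → ι₂ ∈ Set.Ioc (0 : ℝ) ibar →
      1 / ι₁ = 1 / ibar + (w₁ / Q) * ((1 - ibar) / ibar)
        * max (2 * ρ * w₁ * μp * ((1 - ibar) / ibar) * ι₁ ^ 2 - (Q * ρ + ν)) 0 →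
      1 / ι₂ = 1 / ibar + (w₂ / Q) * ((1 - ibar) / ibar)
        * max (2 * ρ * w₂ * μp * ((1 - ibar) / ibar) * ι₂ ^ 2 - (Q * ρ + ν)) 0 →
      ι₂ ≤ ι₁) ∧
    (∀ μ₁ μ₂ ι₁ ι₂ : ℝ, 0 < μ₁ → μ₁ ≤ μ₂ →
      ι₁ ∈ Set.Ioc (0 : ℝ) ibar → ι₂ ∈ Set.Ioc (0 : ℝ) ibar →
      1 / ι₁ = 1 / ibar + (w / Q) * ((1 - ibar) / ibar)
        * max (2 * ρ * w * μ₁ * ((1 - ibar) / ibar) * ι₁ ^ 2 - (Q * ρ + ν)) 0 →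
      1 / ι₂ = 1 / ibar + (w / Q) * ((1 - ibar) / ibar)
        * max (2 * ρ * w * μ₂ * ((1 - ibar) / ibar) * ι₂ ^ 2 - (Q * ρ + ν)) 0 →
      ι₂ ≤ ι₁) ∧
    (∀ Q₁ Q₂ ι₁ ι₂ : ℝ, 0 < Q₁ → Q₁ ≤ Q₂ →
      ι₁ ∈ Set.Ioc (0 : ℝ) ibar → ι₂ ∈ Set.Ioc (0 : ℝ) ibar →
      1 / ι₁ = 1 / ibar + (w / Q₁) * ((1 - ibar) / ibar)
        * max (2 * ρ * w * μp * ((1 - ibar) / ibar) * ι₁ ^ 2 - (Q₁ * ρ + ν)) 0 →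
      1 / ι₂ = 1 / ibar + (w / Q₂) * ((1 - ibar) / ibar)
        * max (2 * ρ * w * μp * ((1 - ibar) / ibar) * ι₂ ^ 2 - (Q₂ * ρ + ν)) 0 →
      ι₁ ≤ ι₂) ∧
    (∀ ν₁ ν₂ ι₁ ι₂ : ℝ, 0 ≤ ν₁ → ν₁ ≤ ν₂ →
      ι₁ ∈ Set.Ioc (0 : ℝ) ibar → ι₂ ∈ Set.Ioc (0 : ℝ) ibar →
      1 / ι₁ = 1 / ibar + (w / Q) * ((1 - ibar) / ibar)
        * max (2 * ρ * w * μp * ((1 - ibar) / ibar) * ι₁ ^ 2 - (Q * ρ + ν₁)) 0 →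
      1 / ι₂ = 1 / ibar + (w / Q) * ((1 - ibar) / ibar)
        * max (2 * ρ * w * μp * ((1 - ibar) / ibar) * ι₂ ^ 2 - (Q * ρ + ν₂)) 0 →
      ι₁ ≤ ι₂) := by
  have h1i : (0:ℝ) < 1 - ibar := by linarith
  have hr : (0:ℝ) ≤ (1 - ibar) / ibar := div_nonneg h1i.le hibar0.le
  refine ⟨?_, ?_, ?_, ?_⟩
  · intro w₁ w₂ ι₁ ι₂ hw₁ hw12 hι₁ hι₂ e1 e2
    have hw₂ : 0 < w₂ := lt_of_lt_of_le hw₁ hw12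
    refine fix_mono
      (fun x => 1 / ibar + (w₁ / Q) * ((1 - ibar) / ibar)
        * max (2 * ρ * w₁ * μp * ((1 - ibar) / ibar) * x ^ 2 - (Q * ρ + ν)) 0)
      (fun x => 1 / ibar + (w₂ / Q) * ((1 - ibar) / ibar)
        * max (2 * ρ * w₂ * μp * ((1 - ibar) / ibar) * x ^ 2 - (Q * ρ + ν)) 0)
      hι₁.1 hι₂.1
      (g_mono (by positivity) (by positivity)) ?_ e1 e2
    have hmax := max_le_max
      (show 2 * ρ * w₁ * μp * ((1 - ibar) / ibar) * ι₁ ^ 2 - (Q * ρ + ν)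
        ≤ 2 * ρ * w₂ * μp * ((1 - ibar) / ibar) * ι₁ ^ 2 - (Q * ρ + ν) by
        nlinarith [mul_nonneg (sub_nonneg.2 hw12)
          (mul_nonneg (mul_nonneg (mul_nonneg hρ.le hμ.le) hr) (sq_nonneg ι₁))])
      (le_refl (0:ℝ))
    have hc : (w₁ / Q) * ((1 - ibar) / ibar) ≤ (w₂ / Q) * ((1 - ibar) / ibar) := by gcongr
    have h0 : (0:ℝ) ≤ max (2 * ρ * w₁ * μp * ((1 - ibar) / ibar) * ι₁ ^ 2 - (Q * ρ + ν)) 0 :=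
      le_max_right _ _
    exact add_le_add_right (mul_le_mul hc hmax h0 (by positivity)) _
  · intro μ₁ μ₂ ι₁ ι₂ hμ₁ hμ12 hι₁ hι₂ e1 e2
    have hμ₂ : 0 < μ₂ := lt_of_lt_of_le hμ₁ hμ12
    refine fix_mono
      (fun x => 1 / ibar + (w / Q) * ((1 - ibar) / ibar)
        * max (2 * ρ * w * μ₁ * ((1 - ibar) / ibar) * x ^ 2 - (Q * ρ + ν)) 0)
      (fun x => 1 / ibar + (w / Q) * ((1 - ibar) / ibar)
        * max (2 * ρ * w * μ₂ * ((1 - ibar) / ibar) * x ^ 2 - (Q * ρ + ν)) 0)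
      hι₁.1 hι₂.1
      (g_mono (by positivity) (by positivity)) ?_ e1 e2
    have hmax := max_le_max
      (show 2 * ρ * w * μ₁ * ((1 - ibar) / ibar) * ι₁ ^ 2 - (Q * ρ + ν)
        ≤ 2 * ρ * w * μ₂ * ((1 - ibar) / ibar) * ι₁ ^ 2 - (Q * ρ + ν) by
        nlinarith [mul_nonneg (sub_nonneg.2 hμ12)
          (mul_nonneg (mul_nonneg (mul_nonneg hρ.le hw.le) hr) (sq_nonneg ι₁))])
      (le_refl (0:ℝ))
    exact add_le_add_right (mul_le_mul_of_nonneg_left hmax (by positivity)) _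
  · intro Q₁ Q₂ ι₁ ι₂ hQ₁ hQ12 hι₁ hι₂ e1 e2
    have hQ₂ : 0 < Q₂ := lt_of_lt_of_le hQ₁ hQ12
    refine fix_mono
      (fun x => 1 / ibar + (w / Q₂) * ((1 - ibar) / ibar)
        * max (2 * ρ * w * μp * ((1 - ibar) / ibar) * x ^ 2 - (Q₂ * ρ + ν)) 0)
      (fun x => 1 / ibar + (w / Q₁) * ((1 - ibar) / ibar)
        * max (2 * ρ * w * μp * ((1 - ibar) / ibar) * x ^ 2 - (Q₁ * ρ + ν)) 0)
      hι₂.1 hι₁.1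
      (g_mono (by positivity) (by positivity)) ?_ e2 e1
    have hmax := max_le_max
      (show 2 * ρ * w * μp * ((1 - ibar) / ibar) * ι₂ ^ 2 - (Q₂ * ρ + ν)
        ≤ 2 * ρ * w * μp * ((1 - ibar) / ibar) * ι₂ ^ 2 - (Q₁ * ρ + ν) by
        nlinarith [mul_nonneg (sub_nonneg.2 hQ12) hρ.le])
      (le_refl (0:ℝ))
    have hc : (w / Q₂) * ((1 - ibar) / ibar) ≤ (w / Q₁) * ((1 - ibar) / ibar) := by gcongr
    have h0 : (0:ℝ) ≤ max (2 * ρ * w * μp * ((1 - ibar) / ibar) * ι₂ ^ 2 - (Q₂ * ρ + ν)) 0 :=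
      le_max_right _ _
    exact add_le_add_right (mul_le_mul hc hmax h0 (by positivity)) _
  · intro ν₁ ν₂ ι₁ ι₂ hν₁ hν12 hι₁ hι₂ e1 e2
    refine fix_mono
      (fun x => 1 / ibar + (w / Q) * ((1 - ibar) / ibar)
        * max (2 * ρ * w * μp * ((1 - ibar) / ibar) * x ^ 2 - (Q * ρ + ν₂)) 0)
      (fun x => 1 / ibar + (w / Q) * ((1 - ibar) / ibar)
        * max (2 * ρ * w * μp * ((1 - ibar) / ibar) * x ^ 2 - (Q * ρ + ν₁)) 0)
      hι₂.1 hι₁.1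
      (g_mono (by positivity) (by positivity)) ?_ e2 e1
    have hmax := max_le_max
      (show 2 * ρ * w * μp * ((1 - ibar) / ibar) * ι₂ ^ 2 - (Q * ρ + ν₂)
        ≤ 2 * ρ * w * μp * ((1 - ibar) / ibar) * ι₂ ^ 2 - (Q * ρ + ν₁) by linarith)
      (le_refl (0:ℝ))
    exact add_le_add_right (mul_le_mul_of_nonneg_left hmax (by positivity)) _
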